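/- Let (X_n) be a sequence of Banach spaces containing a subsequence that contains isomorphs of an infinite-dimensional Banach space X uniformly (there are δ > 0 and into-isomorphisms R_n : X → X_n with max{‖R_n‖, ‖R_n⁻¹‖} ≤ δ). Then for every 0 < p < ∞, the set (Σ_n X_n)_p \ ⋃_{0<q<p}(Σ_n X_n)_q together with 0 contains a closed subspace of (Σ_n X_n)_p of dimension dim X. -/

import Mathlib

open Filter Topology

/-! ### Auxiliary sequence `aSeq n = 1/((n+2) log(n+2)²)` -/

noncomputable def aSeq (n : ℕ) : ℝ := (((n : ℝ) + 2) * Real.log ((n : ℝ) + 2) ^ 2)⁻¹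

lemma log_two_le_log_add (n : ℕ) : Real.log 2 ≤ Real.log ((n : ℝ) + 2) :=
  Real.log_le_log (by norm_num) (le_add_of_nonneg_left (Nat.cast_nonneg n))

lemma aSeq_base_pos (n : ℕ) : 0 < ((n : ℝ) + 2) * Real.log ((n : ℝ) + 2) ^ 2 := by
  have h := log_two_le_log_add n
  have h2 : (0:ℝ) < Real.log 2 := Real.log_pos (by norm_num)
  have : 0 < Real.log ((n : ℝ) + 2) := lt_of_lt_of_le h2 h
  positivity

lemma aSeq_pos (n : ℕ) : 0 < aSeq n := inv_pos.2 (aSeq_base_pos n)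

lemma aSeq_summable : Summable aSeq := by
  have hmono : ∀ ⦃m n : ℕ⦄, 0 < m → m ≤ n → aSeq n ≤ aSeq m := by
    intro m n _ hmn
    have h2 : (0:ℝ) < Real.log 2 := Real.log_pos (by norm_num)
    have hlm : 0 < Real.log ((m : ℝ) + 2) := lt_of_lt_of_le h2 (log_two_le_log_add m)
    apply inv_anti₀ (aSeq_base_pos m)
    have hcast : (m : ℝ) ≤ (n : ℝ) := Nat.cast_le.2 hmn
    have hlog : Real.log ((m : ℝ) + 2) ≤ Real.log ((n : ℝ) + 2) :=
      Real.log_le_log (by positivity) (by linarith)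
    apply mul_le_mul (by linarith) (pow_le_pow_left₀ hlm.le hlog 2) (by positivity) (by positivity)
  rw [← summable_condensed_iff_of_nonneg (fun n => (aSeq_pos n).le) hmono]
  have h2 : (0:ℝ) < Real.log 2 := Real.log_pos (by norm_num)
  have key : ∀ k : ℕ, (2:ℝ) ^ k * aSeq (2 ^ k) ≤
      (((2:ℝ)/Real.log 2) ^ 2) * (((k:ℝ) + 1) ^ 2)⁻¹ := by
    intro k
    have hxpos : (0:ℝ) < (2:ℝ) ^ k := by positivity
    have hlog1 : ((k : ℝ)) * Real.log 2 ≤ Real.log ((2:ℝ) ^ k + 2) := by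
      calc ((k : ℝ)) * Real.log 2 = Real.log ((2:ℝ) ^ k) := by rw [Real.log_pow]
        _ ≤ _ := Real.log_le_log hxpos (by linarith)
    have hlog2 : Real.log 2 ≤ Real.log ((2:ℝ) ^ k + 2) :=
      Real.log_le_log (by norm_num) (by nlinarith)
    have hlogb : ((k:ℝ) + 1)/2 * Real.log 2 ≤ Real.log ((2:ℝ) ^ k + 2) := by
      rcases Nat.eq_zero_or_pos k with hk | hk
      · subst hk; norm_num at hlog2 ⊢; nlinarith
      · have : (1:ℝ) ≤ (k:ℝ) := by exact_mod_cast hk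
        nlinarith
    have hlpos : 0 < ((k:ℝ) + 1)/2 * Real.log 2 := by positivity
    have hb : (((k:ℝ) + 1)/2 * Real.log 2) ^ 2 ≤ Real.log ((2:ℝ) ^ k + 2) ^ 2 :=
      pow_le_pow_left₀ hlpos.le hlogb 2
    have h1 : aSeq (2 ^ k) ≤ ((2:ℝ) ^ k * (((k:ℝ) + 1)/2 * Real.log 2) ^ 2)⁻¹ := by
      unfold aSeq
      push_cast
      apply inv_anti₀ (by positivity)
      apply mul_le_mul (by linarith) hb (by positivity) (by positivity)
    calc (2:ℝ) ^ k * aSeq (2 ^ k)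
        ≤ (2:ℝ) ^ k * ((2:ℝ) ^ k * (((k:ℝ) + 1)/2 * Real.log 2) ^ 2)⁻¹ := by
          exact mul_le_mul_of_nonneg_left h1 (by positivity)
      _ = (((2:ℝ)/Real.log 2) ^ 2) * (((k:ℝ) + 1) ^ 2)⁻¹ := by
          field_simp
  apply Summable.of_nonneg_of_le
    (fun k => mul_nonneg (by positivity) (aSeq_pos _).le) key
  apply Summable.mul_left
  have : Summable (fun n : ℕ => (((n:ℝ)) ^ 2)⁻¹) := by
    simpa using Real.summable_one_div_nat_pow.2 (le_refl 2)
  have h := (summable_nat_add_iff 1).2 this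
  apply h.congr
  intro n; push_cast; ring_nf

lemma aSeq_rpow_not_summable {r : ℝ} (hr0 : 0 < r) (hr1 : r < 1) :
    ¬ Summable (fun n => aSeq n ^ r) := by
  intro hs
  set t : ℝ := (1 + r)/2 with ht
  have htr : r < t := by rw [ht]; linarith
  have ht1 : t < 1 := by rw [ht]; linarith
  have ht0 : 0 < t := by rw [ht]; linarith
  set s : ℝ := (t - r)/(2*r) with hsdef
  have hs0 : 0 < s := by apply div_pos (by linarith) (by linarith)
  have hev : ∀ᶠ x : ℝ in atTop, ‖Real.log x‖ ≤ 1 * ‖x ^ s‖ :=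
    (isLittleO_log_rpow_atTop hs0).def one_pos
  have hnat : ∀ᶠ n : ℕ in atTop, Real.log ((n:ℝ)+2) ≤ ((n:ℝ)+2) ^ s := by
    have htend : Tendsto (fun n : ℕ => (n:ℝ)+2) atTop atTop :=
      tendsto_atTop_add_const_right _ 2 tendsto_natCast_atTop_atTop
    filter_upwards [htend.eventually hev] with n h
    have hl : 0 ≤ Real.log ((n:ℝ)+2) :=
      Real.log_nonneg (by linarith [Nat.cast_nonneg (α := ℝ) n])
    have hx : (0:ℝ) ≤ ((n:ℝ)+2) ^ s := Real.rpow_nonneg (by positivity) s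
    rw [Real.norm_eq_abs, Real.norm_eq_abs, abs_of_nonneg hl, abs_of_nonneg hx, one_mul] at h
    exact h
  obtain ⟨N, hN⟩ := eventually_atTop.1 hnat
  have h1 : Summable (fun n : ℕ => aSeq (n + N) ^ r) := (summable_nat_add_iff N).2 hs
  have h2 : Summable (fun n : ℕ => ((((n + N : ℕ)):ℝ) + 2) ^ (-t)) := by
    refine h1.of_nonneg_of_le (fun n => Real.rpow_nonneg (by positivity) _) (fun n => ?_)
    set x : ℝ := ((n + N : ℕ):ℝ) + 2 with hxdef
    have hx2 : (2:ℝ) ≤ x := by rw [hxdef]; push_cast; linarith [Nat.cast_nonneg (α := ℝ) (n + N)]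
    have hxpos : (0:ℝ) < x := by linarith
    have hlog : Real.log x ≤ x ^ s := hN (n + N) (Nat.le_add_left N n)
    have hlognn : 0 ≤ Real.log x := Real.log_nonneg (by linarith)
    have hsq : Real.log x ^ 2 ≤ x ^ (2 * s) := by
      calc Real.log x ^ 2 ≤ (x ^ s) ^ 2 := pow_le_pow_left₀ hlognn hlog 2
        _ = x ^ (2 * s) := by
            rw [← Real.rpow_natCast (x ^ s) 2, ← Real.rpow_mul hxpos.le]
            norm_num [mul_comm]
    have hbase : x * Real.log x ^ 2 ≤ x ^ (1 + 2 * s) := by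
      calc x * Real.log x ^ 2 ≤ x * x ^ (2 * s) :=
            mul_le_mul_of_nonneg_left hsq hxpos.le
        _ = x ^ (1 + 2 * s) := by
            rw [Real.rpow_add hxpos, Real.rpow_one]
    have hexp : (1 + 2 * s) * r = t := by
      rw [hsdef]; field_simp; ring
    have hkey : (x * Real.log x ^ 2) ^ r ≤ x ^ t := by
      calc (x * Real.log x ^ 2) ^ r ≤ (x ^ (1 + 2 * s)) ^ r :=
            Real.rpow_le_rpow (by positivity) hbase hr0.le
        _ = x ^ t := by rw [← Real.rpow_mul hxpos.le, hexp]
    have haeq : aSeq (n + N) ^ r = ((x * Real.log x ^ 2) ^ r)⁻¹ := by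
      unfold aSeq
      rw [← hxdef, Real.inv_rpow (by positivity)]
    have hlogpos : 0 < Real.log x :=
      lt_of_lt_of_le (Real.log_pos (by norm_num)) (Real.log_le_log (by norm_num) hx2)
    rw [haeq, Real.rpow_neg hxpos.le]
    exact inv_anti₀ (Real.rpow_pos_of_pos (mul_pos hxpos (pow_pos hlogpos 2)) r) hkey
  have h3 : Summable (fun n : ℕ => ((n:ℝ)) ^ (-t)) := by
    rw [← summable_nat_add_iff (N + 2)]
    apply h2.congr
    intro n; push_cast; ring_nf
  have := Real.summable_nat_rpow.1 h3
  linarith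

lemma rpow_add_le_aux {p a b : ℝ} (hp : 0 < p) (ha : 0 ≤ a) (hb : 0 ≤ b) :
    (a + b) ^ p ≤ 2 ^ p * (a ^ p + b ^ p) := by
  have hmax : a + b ≤ 2 * max a b := by
    rcases max_cases a b with ⟨h, h'⟩ | ⟨h, h'⟩ <;> rw [h] <;> linarith
  calc (a + b) ^ p ≤ (2 * max a b) ^ p :=
        Real.rpow_le_rpow (by positivity) hmax hp.le
    _ = 2 ^ p * (max a b) ^ p := Real.mul_rpow (by norm_num) (le_max_of_le_left ha)
    _ ≤ 2 ^ p * (a ^ p + b ^ p) := by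
        apply mul_le_mul_of_nonneg_left _ (by positivity)
        rcases max_cases a b with ⟨h, _⟩ | ⟨h, _⟩ <;> rw [h]
        · nlinarith [Real.rpow_nonneg hb p]
        · nlinarith [Real.rpow_nonneg ha p]

/-! ### The embedding `T` of `X` into `∀ m, Y m` -/

section Tmap
universe u v
variable {X : Type u} [NormedAddCommGroup X] [NormedSpace ℝ X]
  {Y : ℕ → Type v} [∀ n, NormedAddCommGroup (Y n)] [∀ n, NormedSpace ℝ (Y n)]
  {k : ℕ → ℕ} (R : ∀ n, X →L[ℝ] Y (k n)) (c : ℕ → ℝ)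

open Classical in
noncomputable def Tfun (x : X) : ∀ m, Y m := fun m =>
  if h : ∃ n, k n = m then h.choose_spec ▸ (c h.choose • R h.choose x) else 0

lemma Tfun_apply_k (hk : Function.Injective k) (x : X) (n : ℕ) :
    Tfun R c x (k n) = c n • R n x := by
  have h : ∃ n', k n' = k n := ⟨n, rfl⟩
  have key : ∀ (j : ℕ) (e : k j = k n), j = n →
      (e ▸ (c j • R j x) : Y (k n)) = c n • R n x := by
    rintro j e rfl; rfl
  classical
  simp only [Tfun, dif_pos h]
  exact key _ _ (hk h.choose_spec)

lemma Tfun_apply_not (x : X) (m : ℕ) (h : ¬ ∃ n, k n = m) : Tfun R c x m = 0 := by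
  classical
  simp only [Tfun, dif_neg h]

noncomputable def Tmap (hk : Function.Injective k) : X →ₗ[ℝ] ∀ m, Y m where
  toFun := Tfun R c
  map_add' x y := by
    funext m
    by_cases h : ∃ n, k n = m
    · obtain ⟨n, rfl⟩ := h
      simp [Tfun_apply_k R c hk, smul_add]
    · simp [Tfun_apply_not R c _ _ h]
  map_smul' a x := by
    funext m
    by_cases h : ∃ n, k n = m
    · obtain ⟨n, rfl⟩ := h
      simp [Tfun_apply_k R c hk, smul_smul, mul_comm]
    · simp [Tfun_apply_not R c _ _ h]

end Tmap

/-- If `(X_n)` contains a subsequence containing isomorphs of the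
infinite-dimensional Banach space `X` uniformly, then for every `0 < p < ∞`
the set `(Σ_n X_n)_p \ ⋃_{0<q<p}(Σ_n X_n)_q` together with `0` contains a
closed (sequentially, for the `ℓ_p` metric) subspace of dimension `dim X`. -/
theorem stmt14.{u, v} (X : Type u) [NormedAddCommGroup X] [NormedSpace ℝ X]
    [CompleteSpace X] (hX : ¬ FiniteDimensional ℝ X)
    (Y : ℕ → Type v) [∀ n, NormedAddCommGroup (Y n)] [∀ n, NormedSpace ℝ (Y n)]
    [∀ n, CompleteSpace (Y n)]
    (k : ℕ → ℕ) (hk : StrictMono k) (δ : ℝ) (hδ : 0 < δ)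
    (R : ∀ n, X →L[ℝ] Y (k n))
    (hR : ∀ n, ‖R n‖ ≤ δ) (hRinv : ∀ n x, ‖x‖ ≤ δ * ‖R n x‖)
    (p : ℝ) (hp : 0 < p) :
    ∃ S : Submodule ℝ (∀ n, Y n),
      (∀ f ∈ S, Summable fun n => ‖f n‖ ^ p) ∧
      Cardinal.lift.{u} (Module.rank ℝ S) = Cardinal.lift.{v} (Module.rank ℝ X) ∧
      (∀ f ∈ S, f ≠ 0 → ∀ q : ℝ, 0 < q → q < p →
        ¬ Summable fun n => ‖f n‖ ^ q) ∧
      (∀ z : ∀ n, Y n, (Summable fun n => ‖z n‖ ^ p) →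
        (∃ F : ℕ → ∀ n, Y n, (∀ j, F j ∈ S) ∧
          Tendsto (fun j => ∑' n, ‖F j n - z n‖ ^ p) atTop (𝓝 0)) → z ∈ S) := by
  classical
  set c : ℕ → ℝ := fun n => aSeq n ^ (1/p) with hcdef
  have hcpos : ∀ n, 0 < c n := fun n => Real.rpow_pos_of_pos (aSeq_pos n) _
  have hcp : ∀ n, c n ^ p = aSeq n := by
    intro n
    show (aSeq n ^ (1/p)) ^ p = aSeq n
    rw [one_div, Real.rpow_inv_rpow (aSeq_pos n).le hp.ne']
  have hcq : ∀ q : ℝ, ∀ n, c n ^ q = aSeq n ^ (q / p) := by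
    intro q n
    show (aSeq n ^ (1/p)) ^ q = aSeq n ^ (q / p)
    rw [← Real.rpow_mul (aSeq_pos n).le, one_div, inv_mul_eq_div]
  set T := Tmap R c hk.injective with hTdef
  have hTk : ∀ x n, T x (k n) = c n • R n x := fun x n => Tfun_apply_k R c hk.injective x n
  have hTnot : ∀ (x : X) (m : ℕ), (¬ ∃ n, k n = m) → T x m = 0 :=
    fun x m h => Tfun_apply_not R c x m h
  have hnorm : ∀ x n, ‖T x (k n)‖ = c n * ‖R n x‖ := by
    intro x n
    rw [hTk, norm_smul, Real.norm_eq_abs, abs_of_pos (hcpos n)]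
  -- (1) summability
  have hsum : ∀ x : X, Summable fun m => ‖T x m‖ ^ p := by
    intro x
    apply (hk.injective.summable_iff (f := fun m => ‖T x m‖ ^ p) (fun m hm => ?_)).mp
    · have : Summable (fun n => ‖T x (k n)‖ ^ p) := by
        refine Summable.of_nonneg_of_le
          (fun n => Real.rpow_nonneg (norm_nonneg _) _) (fun n => ?_)
          (aSeq_summable.mul_right ((δ * ‖x‖) ^ p))
        rw [hnorm, Real.mul_rpow (hcpos n).le (norm_nonneg _), hcp]
        apply mul_le_mul_of_nonneg_left _ (aSeq_pos n).le
        apply Real.rpow_le_rpow (norm_nonneg _) _ hp.le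
        calc ‖R n x‖ ≤ ‖R n‖ * ‖x‖ := (R n).le_opNorm x
          _ ≤ δ * ‖x‖ := mul_le_mul_of_nonneg_right (hR n) (norm_nonneg x)
      exact this
    · show ‖T x m‖ ^ p = 0
      rw [hTnot x m (fun h => hm (Set.mem_range.2 h)), norm_zero, Real.zero_rpow hp.ne']
  -- injectivity of T
  have hTinj : Function.Injective T := by
    rw [injective_iff_map_eq_zero]
    intro x hx
    have h0 : c 0 • R 0 x = 0 := by
      rw [← hTk x 0, hx]; rfl
    have hR0 : R 0 x = 0 := by
      rcases smul_eq_zero.1 h0 with h | h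
      · exact absurd h (hcpos 0).ne'
      · exact h
    have hle := hRinv 0 x
    rw [hR0, norm_zero, mul_zero] at hle
    exact norm_le_zero_iff.1 hle
  refine ⟨LinearMap.range T, ?_, ?_, ?_, ?_⟩
  · rintro f ⟨x, rfl⟩
    exact hsum x
  · exact (LinearEquiv.ofInjective T hTinj).lift_rank_eq.symm
  · rintro f ⟨x, rfl⟩ hf0 q hq0 hqp hsq
    have hx0 : x ≠ 0 := by
      rintro rfl
      exact hf0 (map_zero T)
    have hxn : 0 < ‖x‖ := norm_pos_iff.2 hx0
    have hsub : Summable (fun n => ‖T x (k n)‖ ^ q) := by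
      have := (hk.injective.summable_iff (f := fun m => ‖T x m‖ ^ q) (fun m hm => by
        show ‖T x m‖ ^ q = 0
        rw [hTnot x m (fun h => hm (Set.mem_range.2 h)), norm_zero,
          Real.zero_rpow hq0.ne'])).mpr hsq
      exact this
    have hcomp : Summable (fun n => aSeq n ^ (q/p) * (‖x‖ / δ) ^ q) := by
      apply hsub.of_nonneg_of_le (fun n =>
        mul_nonneg (Real.rpow_nonneg (aSeq_pos n).le _) (Real.rpow_nonneg (by positivity) _))
      intro n
      rw [hnorm, Real.mul_rpow (hcpos n).le (norm_nonneg _), hcq q n]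
      apply mul_le_mul_of_nonneg_left _ (Real.rpow_nonneg (aSeq_pos n).le _)
      apply Real.rpow_le_rpow (by positivity) _ hq0.le
      rw [div_le_iff₀ hδ, mul_comm]
      exact hRinv n x
    have hconst : (0:ℝ) < (‖x‖ / δ) ^ q := Real.rpow_pos_of_pos (by positivity) q
    have hfin : Summable (fun n => aSeq n ^ (q/p)) := by
      have h := hcomp.mul_right (((‖x‖ / δ) ^ q)⁻¹)
      refine h.congr fun n => ?_
      exact mul_inv_cancel_right₀ hconst.ne' _
    exact aSeq_rpow_not_summable (div_pos hq0 hp) ((div_lt_one hp).2 hqp) hfin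
  -- (4) closedness
  · rintro z hz ⟨F, hFS, hFt⟩
    choose xs hxs using fun j => hFS j
    have hFsum : ∀ j, Summable fun n => ‖F j n‖ ^ p := by
      intro j; rw [← hxs j]; exact hsum (xs j)
    have hdiff : ∀ j, Summable fun n => ‖F j n - z n‖ ^ p := by
      intro j
      refine Summable.of_nonneg_of_le (fun n => Real.rpow_nonneg (norm_nonneg _) _)
        (fun n => ?_) (((hFsum j).add hz).mul_left (2 ^ p))

      calc ‖F j n - z n‖ ^ p ≤ (‖F j n‖ + ‖z n‖) ^ p :=
            Real.rpow_le_rpow (norm_nonneg _) (norm_sub_le _ _) hp.le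
        _ ≤ 2 ^ p * (‖F j n‖ ^ p + ‖z n‖ ^ p) :=
            rpow_add_le_aux hp (norm_nonneg _) (norm_nonneg _)
    have hpt : ∀ m, Tendsto (fun j => F j m) atTop (𝓝 (z m)) := by
      intro m
      rw [tendsto_iff_norm_sub_tendsto_zero]
      have h1 : Tendsto (fun j => ‖F j m - z m‖ ^ p) atTop (𝓝 0) :=
        squeeze_zero (fun j => Real.rpow_nonneg (norm_nonneg _) _)
          (fun j => (hdiff j).le_tsum m (fun n _ => Real.rpow_nonneg (norm_nonneg _) _)) hFt
      have h2 := (Real.continuousAt_rpow_const 0 p⁻¹ (Or.inr (by positivity))).tendsto.comp h1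
      rw [Real.zero_rpow (inv_ne_zero hp.ne')] at h2
      refine h2.congr fun j => ?_
      show (‖F j m - z m‖ ^ p) ^ p⁻¹ = ‖F j m - z m‖
      rw [Real.rpow_rpow_inv (norm_nonneg _) hp.ne']
    have hu : CauchySeq (fun j => F j (k 0)) := (hpt (k 0)).cauchySeq
    have hxc : CauchySeq xs := by
      rw [Metric.cauchySeq_iff] at hu ⊢
      intro ε hε
      obtain ⟨N, hN⟩ := hu (ε * (c 0 / δ)) (mul_pos hε (div_pos (hcpos 0) hδ))
      refine ⟨N, fun i hi j hj => ?_⟩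
      have hb := hN i hi j hj
      have key : dist (xs i) (xs j) ≤ (δ / c 0) * dist (F i (k 0)) (F j (k 0)) := by
        rw [dist_eq_norm, dist_eq_norm]
        have h1 : ‖xs i - xs j‖ ≤ δ * ‖R 0 (xs i - xs j)‖ := hRinv 0 _
        have h2 : c 0 • R 0 (xs i - xs j) = F i (k 0) - F j (k 0) := by
          rw [map_sub, smul_sub, ← hTk, ← hTk, hxs, hxs]
        have h3 : ‖R 0 (xs i - xs j)‖ = (c 0)⁻¹ * ‖F i (k 0) - F j (k 0)‖ := by
          rw [← h2, norm_smul, Real.norm_eq_abs, abs_of_pos (hcpos 0),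
            inv_mul_cancel_left₀ (hcpos 0).ne']
        rw [h3] at h1
        calc ‖xs i - xs j‖ ≤ δ * ((c 0)⁻¹ * ‖F i (k 0) - F j (k 0)‖) := h1
          _ = (δ / c 0) * ‖F i (k 0) - F j (k 0)‖ := by ring
      calc dist (xs i) (xs j) ≤ (δ / c 0) * dist (F i (k 0)) (F j (k 0)) := key
        _ < (δ / c 0) * (ε * (c 0 / δ)) := by
            exact mul_lt_mul_of_pos_left hb (div_pos hδ (hcpos 0))
        _ = ε := by
            have hc0 : c 0 ≠ 0 := (hcpos 0).ne'
            field_simp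
    obtain ⟨x₀, hx₀⟩ := cauchySeq_tendsto_of_complete hxc
    refine ⟨x₀, ?_⟩
    funext m
    by_cases h : ∃ n, k n = m
    · obtain ⟨n, rfl⟩ := h
      have hT1 : Tendsto (fun j => F j (k n)) atTop (𝓝 (c n • R n x₀)) := by
        have htd := (((R n).continuous.tendsto x₀).comp hx₀).const_smul (c n)
        refine htd.congr fun j => ?_
        show c n • R n (xs j) = F j (k n)
        rw [← hxs j, hTk]
      rw [hTk]
      exact tendsto_nhds_unique hT1 (hpt (k n))
    · rw [hTnot x₀ m h]
      have hT0 : Tendsto (fun j => F j m) atTop (𝓝 0) := by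
        have hzero : ∀ j, F j m = 0 := fun j => by rw [← hxs j, hTnot _ m h]
        simpa [hzero] using (tendsto_const_nhds : Tendsto (fun _ : ℕ => (0 : Y m)) atTop _)
      exact tendsto_nhds_unique hT0 (hpt m)
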